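/- Let A be a commutative integral domain and B a reduced commutative ring that is finite as an A-module, with finitely many minimal primes, such that for every minimal prime p of B the composite A → B → B/p is injective. Then the group of A-algebra automorphisms of B is finite. -/
import Mathlib


theorem roots_finite {A B : Type*} [CommRing A] [CommRing B] [IsReduced B] [Algebra A B]
    (hfin : (minimalPrimes B).Finite) (f : Polynomial A) (hm : f.Monic) :
    Set.Finite {b : B | Polynomial.aeval b f = 0} := by
  have : Finite {p // p ∈ minimalPrimes B} := hfin
  have hπ : Function.Injective
      (fun b : B => fun p : {p // p ∈ minimalPrimes B} => Ideal.Quotient.mk p.1 b) := by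
    intro b b' hb
    have hb' : ∀ p ∈ minimalPrimes B, b - b' ∈ p := by
      intro p hp
      have := congrFun hb ⟨p, hp⟩
      simpa [Ideal.Quotient.eq] using this
    have h2 : b - b' ∈ sInf (minimalPrimes B) := Submodule.mem_sInf.2 hb'
    rw [show minimalPrimes B = (⊥ : Ideal B).minimalPrimes from rfl,
      Ideal.sInf_minimalPrimes, show (⊥ : Ideal B).radical = nilradical B from rfl,
      nilradical_eq_zero B] at h2
    simpa [sub_eq_zero] using h2
  have hroots : ∀ p : {p // p ∈ minimalPrimes B},
      Finite {y : B ⧸ p.1 // Polynomial.aeval y f = 0} := by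
    intro p
    have hP : p.1.IsPrime := p.2.1.1
    have : Nontrivial (B ⧸ p.1) := Ideal.Quotient.nontrivial_iff.mpr hP.ne_top
    have hg : (f.map (algebraMap A (B ⧸ p.1))) ≠ 0 := (hm.map _).ne_zero
    have hfin2 := Polynomial.finite_setOf_isRoot hg
    rw [← Set.finite_coe_iff] at hfin2
    have hmem : ∀ y : {y : B ⧸ p.1 // Polynomial.aeval y f = 0},
        (f.map (algebraMap A (B ⧸ p.1))).IsRoot y.1 := by
      intro y
      have := y.2
      rwa [Polynomial.IsRoot, Polynomial.eval_map, ← Polynomial.aeval_def]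
    haveI : Finite {x // (f.map (algebraMap A (B ⧸ p.1))).IsRoot x} := hfin2
    exact Finite.of_injective
      (fun y => (⟨y.1, hmem y⟩ : {x // (f.map (algebraMap A (B ⧸ p.1))).IsRoot x}))
      (fun y y' h => Subtype.ext (Subtype.mk_eq_mk.mp h))
  rw [← Set.finite_coe_iff]
  refine Finite.of_injective
    (fun b : {b : B // Polynomial.aeval b f = 0} =>
      fun p : {p // p ∈ minimalPrimes B} =>
        (⟨Ideal.Quotient.mk p.1 b.1, ?_⟩ : {y : B ⧸ p.1 // Polynomial.aeval y f = 0})) ?_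
  · rw [show (Ideal.Quotient.mk p.1 : B →+* B ⧸ p.1) b.1 =
      (Ideal.Quotient.mkₐ A p.1) b.1 from rfl, Polynomial.aeval_algHom_apply, b.2, map_zero]
  · intro b b' h
    refine Subtype.ext (hπ ?_)
    funext p
    exact congrArg Subtype.val (congrFun h p)

/-- Let `A` be a commutative integral domain and `B` a reduced commutative ring which is
finite as an `A`-module, has finitely many minimal primes, and is such that for every
minimal prime `p` of `B` the composite `A → B → B/p` is injective. Then the group of
`A`-algebra automorphisms of `B` is finite. -/
theorem algAut_finite_of_reduced_module_finite
    {A B : Type*} [CommRing A] [IsDomain A] [CommRing B] [IsReduced B]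
    [Algebra A B] [Module.Finite A B]
    (hfin : (minimalPrimes B).Finite)
    (hinj : ∀ p ∈ minimalPrimes B,
      Function.Injective fun a : A => Ideal.Quotient.mk p (algebraMap A B a)) :
    Finite (B ≃ₐ[A] B) := by
  classical
  obtain ⟨s, hs⟩ := Module.Finite.fg_top (R := A) (M := B)
  have hint : ∀ x : B, IsIntegral A x := fun x => IsIntegral.of_finite A x
  choose f hmon hf using fun x : B => hint x
  have hC : ∀ x : B, Finite {b : B // Polynomial.aeval b (f x) = 0} := by
    intro x
    rw [← Set.finite_coe_iff] at *
    exact (roots_finite hfin (f x) (hmon x)).to_subtype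
  have key : ∀ (σ : B ≃ₐ[A] B) (x : B), Polynomial.aeval (σ x) (f x) = 0 := by
    intro σ x
    have h1 := Polynomial.aeval_algHom_apply (σ : B →ₐ[A] B) x (f x)
    rw [show σ x = (σ : B →ₐ[A] B) x from rfl, h1, Polynomial.aeval_def, hf x, map_zero]
  refine Finite.of_injective
    (fun σ : B ≃ₐ[A] B =>
      fun x : s => (⟨σ x.1, key σ x.1⟩ : {b : B // Polynomial.aeval b (f x.1) = 0})) ?_
  intro σ τ h
  have hst : ∀ x ∈ (s : Set B), σ x = τ x := by
    intro x hx
    exact Subtype.mk_eq_mk.mp (congrFun h ⟨x, hx⟩)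
  have : σ.toLinearMap = τ.toLinearMap :=
    LinearMap.ext_on (f := σ.toLinearMap) (g := τ.toLinearMap) hs hst
  exact AlgEquiv.ext fun b => LinearMap.congr_fun this b
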